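/- Let μ, ν, p₀ be Borel probability measures on ℝ^d, all absolutely continuous with respect to the Lebesgue measure. Let Q_μ : ℝ^d → ℝ^d and Q_ν : ℝ^d → ℝ^d be Borel cyclically monotone maps with Q_μ♯μ = p₀ and Q_ν♯ν = p₀. If T₁, T₂ : ℝ^d → ℝ^d are Borel transport maps from μ to ν satisfying Q_ν(T₁(x)) = Q_μ(x) for μ-almost every x and Q_ν(T₂(x)) = Q_μ(x) for μ-almost every x, then T₁ = T₂ μ-almost everywhere. -/

import Mathlib

open MeasureTheory

/-- A map `T : ℝ^d → ℝ^d` is cyclically monotone if for every `m ≥ 1` and points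
`x⁽¹⁾, …, x⁽ᵐ⁾` (indices taken cyclically), `∑ ⟨x⁽ⁱ⁾, T(x⁽ⁱ⁾) − T(x⁽ⁱ⁺¹⁾)⟩ ≥ 0`,
the inner product being the Euclidean one. -/
def CyclicallyMonotone {d : ℕ} (T : (Fin d → ℝ) → (Fin d → ℝ)) : Prop :=
  ∀ (m : ℕ) (x : Fin (m + 1) → (Fin d → ℝ)),
    0 ≤ ∑ i : Fin (m + 1), ∑ k : Fin d, x i k * (T (x i) k - T (x (i + 1)) k)

namespace QPUaux

open Matrix Set Metric

variable {d : ℕ}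

/-- The sum along a chain of points, used in the Rockafellar construction of a convex
potential for a cyclically monotone map. -/
def chainSum (Q : (Fin d → ℝ) → (Fin d → ℝ)) : ∀ {m : ℕ}, (Fin (m+1) → (Fin d → ℝ)) → ℝ :=
  fun {m} c => ∑ i : Fin m, c i.castSucc ⬝ᵥ (Q (c i.succ) - Q (c i.castSucc))

/-- Value at `z` of the affine function associated to a chain. -/
def chainVal (Q : (Fin d → ℝ) → (Fin d → ℝ)) {m : ℕ} (c : Fin (m+1) → (Fin d → ℝ))
    (z : Fin d → ℝ) : ℝ :=
  chainSum Q c + c (Fin.last m) ⬝ᵥ (z - Q (c (Fin.last m)))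

lemma chainSum_snoc (Q : (Fin d → ℝ) → (Fin d → ℝ)) {m : ℕ} (c : Fin (m+1) → (Fin d → ℝ))
    (y : Fin d → ℝ) :
    chainSum Q (Fin.snoc c y) =
      chainSum Q c + c (Fin.last m) ⬝ᵥ (Q y - Q (c (Fin.last m))) := by
  unfold chainSum
  rw [Fin.sum_univ_castSucc]
  congr 1
  · refine Finset.sum_congr rfl fun i _ => ?_
    rw [Fin.succ_castSucc, Fin.snoc_castSucc, Fin.snoc_castSucc]
  · rw [Fin.succ_last, Fin.snoc_castSucc, Fin.snoc_last]

lemma cyclic_bound {Q : (Fin d → ℝ) → (Fin d → ℝ)} (hQ : CyclicallyMonotone Q)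
    {m : ℕ} (c : Fin (m+1) → (Fin d → ℝ)) (hc : c 0 = 0) (y : Fin d → ℝ) :
    chainVal Q c (Q y) ≤ y ⬝ᵥ (Q y - Q 0) := by
  have h := hQ (m+1) (Fin.snoc c y)
  set x : Fin (m+2) → (Fin d → ℝ) := Fin.snoc c y with hx
  have hsum : ∀ i : Fin (m+2), ∑ k : Fin d, x i k * (Q (x i) k - Q (x (i+1)) k)
      = x i ⬝ᵥ (Q (x i) - Q (x (i+1))) := by
    intro i; rfl
  rw [Finset.sum_congr rfl (fun i _ => hsum i)] at h
  rw [Fin.sum_univ_castSucc] at h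
  have h1 : ∀ i : Fin (m+1), x i.castSucc ⬝ᵥ (Q (x i.castSucc) - Q (x (i.castSucc + 1)))
      = -(x i.castSucc ⬝ᵥ (Q (x i.succ) - Q (x i.castSucc))) := by
    intro i
    rw [Fin.coeSucc_eq_succ, ← dotProduct_neg, neg_sub]
  rw [Finset.sum_congr rfl (fun i _ => h1 i), Finset.sum_neg_distrib] at h
  rw [Fin.last_add_one] at h
  have hx0 : x 0 = 0 := by
    rw [hx, ← Fin.castSucc_zero, Fin.snoc_castSucc, hc]
  have hxl : x (Fin.last (m+1)) = y := by rw [hx, Fin.snoc_last]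
  have hcs : chainSum Q x = chainSum Q c + c (Fin.last m) ⬝ᵥ (Q y - Q (c (Fin.last m))) :=
    chainSum_snoc Q c y
  have : chainSum Q x ≤ x (Fin.last (m+1)) ⬝ᵥ (Q (x (Fin.last (m+1))) - Q (x 0)) := by
    unfold chainSum
    linarith [h]
  rw [hxl, hx0, hcs] at this
  unfold chainVal
  linarith

/-- The set of chain values at `z`. -/
def SV (Q : (Fin d → ℝ) → (Fin d → ℝ)) (z : Fin d → ℝ) : Set ℝ :=
  {v | ∃ (m : ℕ) (c : Fin (m+1) → (Fin d → ℝ)), c 0 = 0 ∧ v = chainVal Q c z}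

/-- The Rockafellar convex potential of the inverse relation of `Q`. -/
noncomputable def psi (Q : (Fin d → ℝ) → (Fin d → ℝ)) (z : Fin d → ℝ) : ℝ :=
  sSup (SV Q z)

lemma SV_nonempty (Q : (Fin d → ℝ) → (Fin d → ℝ)) (z : Fin d → ℝ) : (SV Q z).Nonempty :=
  ⟨chainVal Q (fun _ : Fin 1 => 0) z, 0, (fun _ => 0), rfl, rfl⟩

lemma bddAbove_SV_Q {Q : (Fin d → ℝ) → (Fin d → ℝ)} (hQ : CyclicallyMonotone Q)
    (y : Fin d → ℝ) : BddAbove (SV Q (Q y)) := by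
  refine ⟨y ⬝ᵥ (Q y - Q 0), ?_⟩
  rintro v ⟨m, c, hc, rfl⟩
  exact cyclic_bound hQ c hc y

lemma chainVal_combo {Q : (Fin d → ℝ) → (Fin d → ℝ)} {m : ℕ} (c : Fin (m+1) → (Fin d → ℝ))
    {a b : ℝ} (hab : a + b = 1) (z w : Fin d → ℝ) :
    chainVal Q c (a • z + b • w) = a * chainVal Q c z + b * chainVal Q c w := by
  unfold chainVal
  set u := c (Fin.last m)
  set q := Q (c (Fin.last m))
  have key : u ⬝ᵥ (a • z + b • w - q) = a * (u ⬝ᵥ (z - q)) + b * (u ⬝ᵥ (w - q)) := by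
    have h2 : a • z + b • w - q = a • (z - q) + b • (w - q) := by
      have h1 : a • (z - q) + b • (w - q) = a • z + b • w - (a + b) • q := by
        rw [add_smul, smul_sub, smul_sub]; abel
      rw [h1, hab, one_smul]
    rw [h2, dotProduct_add, dotProduct_smul, dotProduct_smul]
    rfl
  rw [key]
  linear_combination (chainSum Q c) * hab.symm

/-- Effective domain of the potential: the set of points where the chain values are
bounded above. -/
def Dom (Q : (Fin d → ℝ) → (Fin d → ℝ)) : Set (Fin d → ℝ) := {z | BddAbove (SV Q z)}

lemma mem_Dom_Q {Q : (Fin d → ℝ) → (Fin d → ℝ)} (hQ : CyclicallyMonotone Q) (y : Fin d → ℝ) :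
    Q y ∈ Dom Q := bddAbove_SV_Q hQ y

lemma psi_le_combo {Q : (Fin d → ℝ) → (Fin d → ℝ)} {z w : Fin d → ℝ}
    (hz : z ∈ Dom Q) (hw : w ∈ Dom Q) {a b : ℝ} (ha : 0 ≤ a) (hb : 0 ≤ b) (hab : a + b = 1) :
    psi Q (a • z + b • w) ≤ a * psi Q z + b * psi Q w := by
  apply csSup_le (SV_nonempty Q _)
  rintro v ⟨m, c, hc, rfl⟩
  rw [chainVal_combo c hab]
  have h1 : chainVal Q c z ≤ psi Q z := le_csSup hz ⟨m, c, hc, rfl⟩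
  have h2 : chainVal Q c w ≤ psi Q w := le_csSup hw ⟨m, c, hc, rfl⟩
  have := mul_le_mul_of_nonneg_left h1 ha
  have := mul_le_mul_of_nonneg_left h2 hb
  linarith

lemma convex_Dom (Q : (Fin d → ℝ) → (Fin d → ℝ)) : Convex ℝ (Dom Q) := by
  rintro z hz w hw a b ha hb hab
  obtain ⟨Mz, hMz⟩ := hz
  obtain ⟨Mw, hMw⟩ := hw
  refine ⟨a * Mz + b * Mw, ?_⟩
  rintro v ⟨m, c, hc, rfl⟩
  rw [chainVal_combo c hab]
  have h1 : chainVal Q c z ≤ Mz := hMz ⟨m, c, hc, rfl⟩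
  have h2 : chainVal Q c w ≤ Mw := hMw ⟨m, c, hc, rfl⟩
  have := mul_le_mul_of_nonneg_left h1 ha
  have := mul_le_mul_of_nonneg_left h2 hb
  linarith

lemma convexOn_psi (Q : (Fin d → ℝ) → (Fin d → ℝ)) : ConvexOn ℝ (Dom Q) (psi Q) :=
  ⟨convex_Dom Q, fun _ hz _ hw _ _ ha hb hab => psi_le_combo hz hw ha hb hab⟩

/-- The subgradient inequality for the potential: each `y` is a subgradient of `psi Q`
at `Q y`. -/
lemma psi_subgrad {Q : (Fin d → ℝ) → (Fin d → ℝ)}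
    (y : Fin d → ℝ) {w : Fin d → ℝ} (hw : w ∈ Dom Q) :
    psi Q (Q y) + y ⬝ᵥ (w - Q y) ≤ psi Q w := by
  have key : ∀ v ∈ SV Q (Q y), v + y ⬝ᵥ (w - Q y) ∈ SV Q w := by
    rintro v ⟨m, c, hc, rfl⟩
    refine ⟨m+1, Fin.snoc c y, ?_, ?_⟩
    · rw [← Fin.castSucc_zero, Fin.snoc_castSucc, hc]
    · unfold chainVal
      rw [chainSum_snoc, Fin.snoc_last]
  have h1 : ∀ v ∈ SV Q (Q y), v ≤ psi Q w - y ⬝ᵥ (w - Q y) := by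
    intro v hv
    have h2 := le_csSup hw (key v hv)
    have hpw : psi Q w = sSup (SV Q w) := rfl
    linarith
  have h3 := csSup_le (SV_nonempty Q (Q y)) h1
  have hpy : psi Q (Q y) = sSup (SV Q (Q y)) := rfl
  linarith

/-- For a convex set in a finite-dimensional space, the interior of the closure is
contained in the set. -/
lemma interior_closure_subset {s : Set (Fin d → ℝ)} (hs : Convex ℝ s) :
    interior (closure s) ⊆ s := by
  by_cases hne : (interior s).Nonempty
  · obtain ⟨a, ha⟩ := hne
    intro x hx
    have hopen : IsOpen (interior (closure s)) := isOpen_interior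
    have hcont : Continuous (fun ε : ℝ => x + ε • (x - a)) := by continuity
    have h0 : (fun ε : ℝ => x + ε • (x - a)) 0 = x := by simp
    have hev : ∀ᶠ ε : ℝ in nhds 0, x + ε • (x - a) ∈ interior (closure s) := by
      have := hcont.continuousAt (x := (0:ℝ))
      have hmem : interior (closure s) ∈ nhds ((fun ε : ℝ => x + ε • (x - a)) 0) := by
        rw [h0]; exact hopen.mem_nhds hx
      exact this.eventually_mem hmem
    obtain ⟨ε, hε, hz⟩ : ∃ ε : ℝ, 0 < ε ∧ x + ε • (x - a) ∈ interior (closure s) := by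
      rcases Metric.eventually_nhds_iff.1 hev with ⟨δ, hδ, h⟩
      exact ⟨δ/2, by positivity,
        h (by rw [Real.dist_eq, sub_zero, abs_of_pos (by positivity)]; linarith)⟩
    set z := x + ε • (x - a) with hzdef
    have hzs : z ∈ closure s := interior_subset hz
    have hxseg : x ∈ openSegment ℝ a z := by
      refine ⟨ε / (1 + ε), 1 / (1 + ε), by positivity, by positivity, ?_, ?_⟩
      · have h1ε : (1:ℝ) + ε ≠ 0 := by positivity
        field_simp
        try ring
      · have h1ε : (1:ℝ) + ε ≠ 0 := by positivity
        rw [hzdef]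
        match_scalars
        all_goals (field_simp; try ring)
    have := hs.openSegment_interior_closure_subset_interior ha hzs
    exact interior_subset (this hxseg)
  · intro x hx
    exfalso
    have h1 : (interior (closure s)).Nonempty := ⟨x, hx⟩
    have h2 : affineSpan ℝ (closure s) = ⊤ :=
      (hs.closure.interior_nonempty_iff_affineSpan_eq_top).1 h1
    have h3 : affineSpan ℝ (closure s) ≤ affineSpan ℝ s := by
      rw [affineSpan_le]
      have : closure s ⊆ closure (affineSpan ℝ s : Set (Fin d → ℝ)) :=
        closure_mono (subset_affineSpan ℝ s)
      rwa [IsClosed.closure_eq ((affineSpan ℝ s).closed_of_finiteDimensional)] at this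
    have h4 : affineSpan ℝ s = ⊤ := top_le_iff.1 (h2 ▸ h3)
    have := (hs.interior_nonempty_iff_affineSpan_eq_top).2 h4
    exact hne this

/-- If `ψ` has a derivative at `z` in an open set `U`, then any subgradient of `ψ` at `z`
(relative to `U`) pairs against every vector the same way the derivative does. -/
lemma dot_eq_fderiv {U : Set (Fin d → ℝ)} (hU : IsOpen U) {ψ : (Fin d → ℝ) → ℝ}
    {z y : Fin d → ℝ} {f : (Fin d → ℝ) →L[ℝ] ℝ} (hz : z ∈ U) (hf : HasFDerivAt ψ f z)
    (hsub : ∀ w ∈ U, ψ z + y ⬝ᵥ (w - z) ≤ ψ w) (v : Fin d → ℝ) :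
    y ⬝ᵥ v = f v := by
  set g : ℝ → ℝ := fun t => ψ (z + t • v) - (ψ z + t * (y ⬝ᵥ v)) with hg
  have hγ : HasDerivAt (fun t : ℝ => z + t • v) v 0 := by
    have h1 : HasDerivAt (fun t : ℝ => t • v) ((1:ℝ) • v) 0 := (hasDerivAt_id (0:ℝ)).smul_const v
    rw [one_smul] at h1
    exact h1.const_add z
  have hγ0 : z + (0:ℝ) • v = z := by simp
  have hψγ : HasDerivAt (fun t : ℝ => ψ (z + t • v)) (f v) 0 := by
    have hf' : HasFDerivAt ψ f ((fun t : ℝ => z + t • v) 0) := by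
      simpa using hf
    exact hf'.comp_hasDerivAt (0:ℝ) hγ
  have haff : HasDerivAt (fun t : ℝ => ψ z + t * (y ⬝ᵥ v)) (y ⬝ᵥ v) 0 :=
    (hasDerivAt_mul_const (y ⬝ᵥ v)).const_add (ψ z)
  have hgder : HasDerivAt g (f v - y ⬝ᵥ v) 0 := hψγ.sub haff
  have hmin : IsLocalMin g 0 := by
    have hev : ∀ᶠ t : ℝ in nhds 0, z + t • v ∈ U := by
      have hcont : Continuous (fun t : ℝ => z + t • v) := by continuity
      have := hcont.continuousAt (x := (0:ℝ))
      refine this.eventually_mem ?_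
      rw [hγ0]
      exact hU.mem_nhds hz
    refine hev.mono fun t ht => ?_
    have := hsub _ ht
    have hd : y ⬝ᵥ (z + t • v - z) = t * (y ⬝ᵥ v) := by
      rw [add_sub_cancel_left, dotProduct_smul]
      rfl
    rw [hd] at this
    simp only [hg, g]
    rw [hγ0]
    simp only [zero_mul, add_zero] at *
    linarith
  have := hmin.hasDerivAt_eq_zero hgder
  linarith [this]

/-- A function locally Lipschitz on an open subset of `ℝ^d` is differentiable at almost
every point of that subset (local version of Rademacher's theorem). -/
lemma ae_diff_of_locallyLipschitzOn {U : Set (Fin d → ℝ)} (hU : IsOpen U)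
    {ψ : (Fin d → ℝ) → ℝ} (h : LocallyLipschitzOn U ψ) :
    volume {z | z ∈ U ∧ ¬ DifferentiableAt ℝ ψ z} = 0 := by
  apply measure_null_of_locally_null
  rintro x ⟨hxU, -⟩
  obtain ⟨K, t, ht, hlip⟩ := h hxU
  rw [nhdsWithin_eq_nhds.2 (hU.mem_nhds hxU)] at ht
  have htU : t ∩ U ∈ nhds x := Filter.inter_mem ht (hU.mem_nhds hxU)
  obtain ⟨r, hr, hball⟩ := Metric.mem_nhds_iff.1 htU
  have hlipb : LipschitzOnWith K ψ (Metric.ball x r) :=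
    hlip.mono (fun z hz => (hball hz).1)
  obtain ⟨g, hg, heq⟩ := hlipb.extend_real
  have hae : ∀ᵐ z : Fin d → ℝ, DifferentiableAt ℝ g z := hg.ae_differentiableAt_of_real
  have hnull : volume {z | z ∈ Metric.ball x r ∧ ¬ DifferentiableAt ℝ ψ z} = 0 := by
    have : ∀ᵐ z : Fin d → ℝ, ¬ (z ∈ Metric.ball x r ∧ ¬ DifferentiableAt ℝ ψ z) := by
      filter_upwards [hae] with z hzg
      rintro ⟨hzb, hznd⟩
      apply hznd
      have hev : ψ =ᶠ[nhds z] g :=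
        Filter.eventuallyEq_of_mem (Metric.isOpen_ball.mem_nhds hzb) heq
      exact hev.differentiableAt_iff.2 hzg
    simpa [ae_iff] using this
  refine ⟨Metric.ball x r ∩ {z | z ∈ U ∧ ¬ DifferentiableAt ℝ ψ z}, ?_, ?_⟩
  · rw [Set.inter_comm]
    exact inter_mem_nhdsWithin _ (Metric.ball_mem_nhds x hr)
  · refine measure_mono_null (fun z hz => ?_) hnull
    exact ⟨hz.1, hz.2.2⟩

end QPUaux

/-- Uniqueness (`μ`-a.e.) of `p₀`-quantile-preserving transport maps: if `Q_μ`, `Q_ν` are the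
cyclically monotone transports to the reference measure `p₀`, and `T₁`, `T₂` are transport maps
from `μ` to `ν` with `Q_ν ∘ T₁ = Q_μ` and `Q_ν ∘ T₂ = Q_μ` `μ`-a.e., then `T₁ = T₂` `μ`-a.e. -/
theorem quantilePreserving_unique {d : ℕ}
    (μ ν p₀ : Measure (Fin d → ℝ))
    [IsProbabilityMeasure μ] [IsProbabilityMeasure ν] [IsProbabilityMeasure p₀]
    (hμ : μ ≪ volume) (hν : ν ≪ volume) (hp₀ : p₀ ≪ volume)
    (Qμ Qν : (Fin d → ℝ) → (Fin d → ℝ))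
    (hQμm : Measurable Qμ) (hQνm : Measurable Qν)
    (hQμcm : CyclicallyMonotone Qμ) (hQνcm : CyclicallyMonotone Qν)
    (hQμ : μ.map Qμ = p₀) (hQν : ν.map Qν = p₀)
    (T₁ T₂ : (Fin d → ℝ) → (Fin d → ℝ))
    (hT₁m : Measurable T₁) (hT₂m : Measurable T₂)
    (hT₁ : μ.map T₁ = ν) (hT₂ : μ.map T₂ = ν)
    (hqp₁ : ∀ᵐ x ∂μ, Qν (T₁ x) = Qμ x) (hqp₂ : ∀ᵐ x ∂μ, Qν (T₂ x) = Qμ x) :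
    T₁ =ᵐ[μ] T₂ := by
  classical
  open Matrix Set in
  set D := QPUaux.Dom Qν with hD
  set ψ := QPUaux.psi Qν with hψdef
  set C := closure D with hC
  set U := interior C with hU
  have hDconv : Convex ℝ D := QPUaux.convex_Dom Qν
  have hCconv : Convex ℝ C := hDconv.closure
  have hUD : U ⊆ D := QPUaux.interior_closure_subset hDconv
  have hUopen : IsOpen U := isOpen_interior
  have hUconv : Convex ℝ U := hCconv.interior
  have hψU : ConvexOn ℝ U ψ := (QPUaux.convexOn_psi Qν).subset hUD hUconv
  have hlip : LocallyLipschitzOn U ψ := hψU.locallyLipschitzOn hUopen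
  have hdiffnull : volume {z | z ∈ U ∧ ¬ DifferentiableAt ℝ ψ z} = 0 :=
    QPUaux.ae_diff_of_locallyLipschitzOn hUopen hlip
  set A := {z | DifferentiableAt ℝ ψ z} ∩ U with hA
  have hAmeas : MeasurableSet A :=
    (measurableSet_of_differentiableAt ℝ ψ).inter hUopen.measurableSet
  have hCclosed : IsClosed C := isClosed_closure
  have hfrontnull : volume (frontier C) = 0 := hCconv.addHaar_frontier volume
  have hp₀C : p₀ Cᶜ = 0 := by
    rw [← hQν, Measure.map_apply hQνm hCclosed.measurableSet.compl]
    have hpre : Qν ⁻¹' Cᶜ = ∅ := by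
      ext y
      simp only [Set.mem_preimage, Set.mem_compl_iff, Set.mem_empty_iff_false, iff_false,
        not_not]
      exact subset_closure (QPUaux.mem_Dom_Q hQνcm y)
    rw [hpre]
    simp
  have hp₀front : p₀ (frontier C) = 0 := hp₀ hfrontnull
  have hp₀diff : p₀ {z | z ∈ U ∧ ¬ DifferentiableAt ℝ ψ z} = 0 := hp₀ hdiffnull
  have hp₀Ac : p₀ Aᶜ = 0 := by
    have hsub : Aᶜ ⊆ {z | z ∈ U ∧ ¬ DifferentiableAt ℝ ψ z} ∪ frontier C ∪ Cᶜ := by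
      intro z hzc
      by_cases hzC : z ∈ C
      · by_cases hzU : z ∈ U
        · left; left
          refine ⟨hzU, fun hdiff => hzc ⟨hdiff, hzU⟩⟩
        · left; right
          rw [hCclosed.frontier_eq]
          exact ⟨hzC, hzU⟩
      · right; exact hzC
    refine measure_mono_null hsub ?_
    refine le_antisymm ?_ zero_le
    calc p₀ ({z | z ∈ U ∧ ¬ DifferentiableAt ℝ ψ z} ∪ frontier C ∪ Cᶜ)
        ≤ p₀ ({z | z ∈ U ∧ ¬ DifferentiableAt ℝ ψ z} ∪ frontier C) + p₀ Cᶜ :=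
          measure_union_le _ _
      _ ≤ p₀ {z | z ∈ U ∧ ¬ DifferentiableAt ℝ ψ z} + p₀ (frontier C) + p₀ Cᶜ := by
          gcongr; exact measure_union_le _ _
      _ = 0 := by rw [hp₀diff, hp₀front, hp₀C]; simp
  have hνA : ν (Qν ⁻¹' Aᶜ) = 0 := by
    rw [← Measure.map_apply hQνm hAmeas.compl, hQν]
    exact hp₀Ac
  have hμ1 : μ (T₁ ⁻¹' (Qν ⁻¹' Aᶜ)) = 0 := by
    rw [← Measure.map_apply hT₁m (hQνm hAmeas.compl), hT₁]
    exact hνA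
  have hμ2 : μ (T₂ ⁻¹' (Qν ⁻¹' Aᶜ)) = 0 := by
    rw [← Measure.map_apply hT₂m (hQνm hAmeas.compl), hT₂]
    exact hνA
  have hae1 : ∀ᵐ x ∂μ, Qν (T₁ x) ∈ A := by
    rw [ae_iff]
    refine measure_mono_null (fun x hx => ?_) hμ1
    simpa using hx
  have hae2 : ∀ᵐ x ∂μ, Qν (T₂ x) ∈ A := by
    rw [ae_iff]
    refine measure_mono_null (fun x hx => ?_) hμ2
    simpa using hx
  filter_upwards [hqp₁, hqp₂, hae1, hae2] with x h1 h2 h3 h4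
  rw [h1] at h3
  set z := Qμ x with hz
  have hzA : z ∈ A := h3
  have hzU : z ∈ U := hzA.2
  have hzdiff : DifferentiableAt ℝ ψ z := hzA.1
  have hf : HasFDerivAt ψ (fderiv ℝ ψ z) z := hzdiff.hasFDerivAt
  have sub1 : ∀ w ∈ U, ψ z + T₁ x ⬝ᵥ (w - z) ≤ ψ w := by
    intro w hw
    have := QPUaux.psi_subgrad (Q := Qν) (T₁ x) (hUD hw)
    rwa [h1] at this
  have sub2 : ∀ w ∈ U, ψ z + T₂ x ⬝ᵥ (w - z) ≤ ψ w := by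
    intro w hw
    have := QPUaux.psi_subgrad (Q := Qν) (T₂ x) (hUD hw)
    rwa [h2] at this
  funext k
  have e1 : T₁ x ⬝ᵥ Pi.single k 1 = fderiv ℝ ψ z (Pi.single k 1) :=
    QPUaux.dot_eq_fderiv hUopen hzU hf sub1 (Pi.single k 1)
  have e2 : T₂ x ⬝ᵥ Pi.single k 1 = fderiv ℝ ψ z (Pi.single k 1) :=
    QPUaux.dot_eq_fderiv hUopen hzU hf sub2 (Pi.single k 1)
  have hs1 : T₁ x ⬝ᵥ Pi.single k 1 = T₁ x k := by simp
  have hs2 : T₂ x ⬝ᵥ Pi.single k 1 = T₂ x k := by simp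
  rw [← hs1, ← hs2, e1, e2]
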